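/- arXiv:1810.07828 — 3 statements merged into one kernel-verified Lean document; each statement's English description precedes it below -/
import Mathlib

section
/- Let f₀ ∈ X be positive and nonzero. Then there exists r > 0, depending only on f₀, and a constant C > 0, depending only on the model parameters (M, M⁻, M⁰, M⁺, v, the K^(l), J^(l), w^(l), K^int, J^int, w^int) and not on f₀, such that for every f in the ball of radius r around f₀ in X, the weight denominators Σ_n w^(l)_n F_n(f) (for all l ∈ {1,…,M⁻}) and Σ_n w^int_n F_n(f) are strictly positive, so that the flux j(f) is well defined, and ‖j(f)‖ ≤ C (β + ‖f₀‖/F(f₀)) ‖f‖. -/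
open MeasureTheory Filter

namespace GBN

structure Params (M : ℕ) where
  hM : 0 < M
  Mm : ℕ
  M0 : ℕ
  Mp : ℕ
  hsum : Mm + M0 + Mp = M
  v : Fin M → ℝ
  hvneg : ∀ σ : Fin M, (σ : ℕ) < Mm → v σ < 0
  hvzero : ∀ σ : Fin M, Mm ≤ (σ : ℕ) → (σ : ℕ) < Mm + M0 → v σ = 0
  hvpos : ∀ σ : Fin M, Mm + M0 ≤ (σ : ℕ) → 0 < v σ
  Kb : Fin M → ℕ
  hKb : ∀ l : Fin M, (l : ℕ) < Mm → 0 < Kb l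
  Jb : Fin M → Fin M → Fin M → ℕ
  hJbdiag : ∀ l σ, Jb l σ σ = 0
  hJbrow : ∀ l : Fin M, (l : ℕ) < Mm → ∀ s : Fin M, (∑ σ : Fin M, Jb l s σ) = Kb l
  wb : Fin M → Fin M → ℝ
  hwb : ∀ l : Fin M, (l : ℕ) < Mm → ∀ σ : Fin M, 0 < wb l σ
  Kint : ℕ
  hKint : 0 < Kint
  Jint : Fin M → Fin M → ℕ
  hJintdiag : ∀ σ, Jint σ σ = 0
  hJintrow : ∀ s : Fin M, (∑ σ : Fin M, Jint s σ) = Kint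
  wint : Fin M → ℝ
  hwint : ∀ σ, 0 < wint σ
  beta : ℝ
  hbeta : 0 ≤ beta

variable {M : ℕ}

/-- The set of species that can undergo boundary events. -/
def bSet (P : Params M) : Finset (Fin M) := Finset.univ.filter fun l => (l : ℕ) < P.Mm

/-- Positivity of an element of X. -/
def Positive (f : Fin M → ℝ → ℝ) : Prop := ∀ σ : Fin M, ∀ x : ℝ, 0 ≤ x → 0 ≤ f σ x

/-- Nonvanishing of an element of X. -/
def Nonzero (f : Fin M → ℝ → ℝ) : Prop := ∃ σ : Fin M, ∃ x : ℝ, 0 ≤ x ∧ f σ x ≠ 0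

/-- Membership in the Banach space X of continuous, integrable (and bounded) functions. -/
def MemX (f : Fin M → ℝ → ℝ) : Prop :=
  (∀ σ, ContinuousOn (f σ) (Set.Ici 0)) ∧
  (∀ σ, IntegrableOn (f σ) (Set.Ici 0)) ∧
  (∀ σ, BddAbove ((fun x => |f σ x|) '' Set.Ici 0))

noncomputable def normL1 (f : Fin M → ℝ → ℝ) : ℝ :=
  ∑ σ : Fin M, ∫ x in Set.Ici (0:ℝ), |f σ x|

noncomputable def normLinf (f : Fin M → ℝ → ℝ) : ℝ :=
  ∑ σ : Fin M, sSup ((fun x => |f σ x|) '' Set.Ici 0)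

/-- The norm of X. -/
noncomputable def normX (f : Fin M → ℝ → ℝ) : ℝ := normL1 f + normLinf f

/-- Pointwise difference. -/
def subf (f g : Fin M → ℝ → ℝ) : Fin M → ℝ → ℝ := fun σ x => f σ x - g σ x

/-- The total number of particles of species σ. -/
noncomputable def Fc (f : Fin M → ℝ → ℝ) (σ : Fin M) : ℝ := ∫ x in Set.Ici (0:ℝ), f σ x

/-- The total number of particles. -/
noncomputable def Ft (f : Fin M → ℝ → ℝ) : ℝ := ∑ σ : Fin M, Fc f σ

/-- The weighted fraction W_σ for a weight vector w. -/
noncomputable def Wgt (w : Fin M → ℝ) (f : Fin M → ℝ → ℝ) (σ : Fin M) : ℝ :=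
  w σ / ∑ n : Fin M, w n * Fc f n

/-- The weighted fraction γ. -/
noncomputable def gam (P : Params M) (f : Fin M → ℝ → ℝ) : ℝ :=
  Ft f / ∑ n : Fin M, P.wint n * Fc f n

/-- The boundary flux rate L̇_l = -v_l f_l(0). -/
noncomputable def Ldot (P : Params M) (f : Fin M → ℝ → ℝ) (l : Fin M) : ℝ := -(P.v l) * f l 0

/-- The flux j(f). -/
noncomputable def flux (P : Params M) (f : Fin M → ℝ → ℝ) (σ : Fin M) (x : ℝ) : ℝ :=
  (∑ s : Fin M, ((∑ l ∈ bSet P, Ldot P f l * (P.Jb l s σ : ℝ) * Wgt (P.wb l) f s)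
      + P.beta * gam P f * (P.Jint s σ : ℝ) * P.wint s) * f s x)
  - ((∑ l ∈ bSet P, Ldot P f l * (P.Kb l : ℝ) * Wgt (P.wb l) f σ)
      + P.beta * gam P f * (P.Kint : ℝ) * P.wint σ) * f σ x

/-- Extension by zero to negative arguments. -/
noncomputable def ext (g : ℝ → ℝ) (x : ℝ) : ℝ := if 0 ≤ x then g x else 0

/-- Continuity in time of a curve with values in X, i.e. membership in C([0,T];X). -/
def ContinuousInX (T : ℝ) (u : ℝ → Fin M → ℝ → ℝ) : Prop :=
  ∀ t ∈ Set.Icc (0:ℝ) T, ∀ ε > (0:ℝ), ∃ δ > (0:ℝ), ∀ s ∈ Set.Icc (0:ℝ) T,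
    |s - t| < δ → normX (subf (u s) (u t)) < ε

/-- A mild solution of the kinetic equations on [0,T]. -/
def MildSolution (P : Params M) (T : ℝ) (u : ℝ → Fin M → ℝ → ℝ) : Prop :=
  (∀ t ∈ Set.Icc (0:ℝ) T, MemX (u t)) ∧
  ContinuousInX T u ∧
  ∀ σ : Fin M, ∀ x : ℝ, 0 ≤ x → ∀ t ∈ Set.Icc (0:ℝ) T,
    u t σ x = ext (u 0 σ) (x - P.v σ * t)
      + ∫ τ in (0:ℝ)..t, ext (flux P (u τ) σ) (x - P.v σ * (t - τ))

/-- Positivity of a curve on [0,T]. -/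
def PositiveOn (T : ℝ) (u : ℝ → Fin M → ℝ → ℝ) : Prop :=
  ∀ t ∈ Set.Icc (0:ℝ) T, Positive (u t)

/-- u is the unique maximal positive mild solution with initial datum f₀,
defined on [0, Tstar). -/
def IsMaximalSolution (P : Params M) (f₀ : Fin M → ℝ → ℝ)
    (Tstar : ENNReal) (u : ℝ → Fin M → ℝ → ℝ) : Prop :=
  0 < Tstar ∧
  (∀ σ : Fin M, ∀ x : ℝ, 0 ≤ x → u 0 σ x = f₀ σ x) ∧
  (∀ T : ℝ, 0 < T → ENNReal.ofReal T < Tstar → MildSolution P T u ∧ PositiveOn T u) ∧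
  (∀ T : ℝ, 0 < T → ∀ g : ℝ → Fin M → ℝ → ℝ,
      MildSolution P T g → PositiveOn T g → (∀ σ : Fin M, ∀ x : ℝ, 0 ≤ x → g 0 σ x = f₀ σ x) →
      ENNReal.ofReal T < Tstar ∧
        ∀ t ∈ Set.Icc (0:ℝ) T, ∀ σ : Fin M, ∀ x : ℝ, 0 ≤ x → g t σ x = u t σ x)

end GBN

namespace GBN

section Helpers

variable {M : ℕ}

lemma abs_le_sSup' {f : ℝ → ℝ} (hb : BddAbove ((fun x => |f x|) '' Set.Ici 0)) {x : ℝ}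
    (hx : 0 ≤ x) : |f x| ≤ sSup ((fun x => |f x|) '' Set.Ici 0) :=
  le_csSup hb ⟨x, hx, rfl⟩

lemma sSup_abs_nonneg' {f : ℝ → ℝ} (hb : BddAbove ((fun x => |f x|) '' Set.Ici 0)) :
    0 ≤ sSup ((fun x => |f x|) '' Set.Ici 0) :=
  le_trans (abs_nonneg _) (abs_le_sSup' hb le_rfl)

lemma normL1_nonneg (f : Fin M → ℝ → ℝ) : 0 ≤ normL1 f :=
  Finset.sum_nonneg fun _ _ => integral_nonneg fun _ => abs_nonneg _

lemma normLinf_nonneg {f : Fin M → ℝ → ℝ} (hf : MemX f) : 0 ≤ normLinf f :=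
  Finset.sum_nonneg fun σ _ => sSup_abs_nonneg' (hf.2.2 σ)

lemma normL1_le_normX {f : Fin M → ℝ → ℝ} (hf : MemX f) : normL1 f ≤ normX f :=
  le_add_of_nonneg_right (normLinf_nonneg hf)

lemma normLinf_le_normX {f : Fin M → ℝ → ℝ} (hf : MemX f) : normLinf f ≤ normX f :=
  le_add_of_nonneg_left (normL1_nonneg f)

lemma normX_nonneg {f : Fin M → ℝ → ℝ} (hf : MemX f) : 0 ≤ normX f :=
  add_nonneg (normL1_nonneg f) (normLinf_nonneg hf)

lemma abs_apply_le_normLinf {f : Fin M → ℝ → ℝ} (hf : MemX f) (σ : Fin M) {x : ℝ}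
    (hx : 0 ≤ x) : |f σ x| ≤ normLinf f :=
  (abs_le_sSup' (hf.2.2 σ) hx).trans
    (Finset.single_le_sum (fun s _ => sSup_abs_nonneg' (hf.2.2 s)) (Finset.mem_univ σ))

lemma abs_apply_le_normX {f : Fin M → ℝ → ℝ} (hf : MemX f) (σ : Fin M) {x : ℝ}
    (hx : 0 ≤ x) : |f σ x| ≤ normX f :=
  (abs_apply_le_normLinf hf σ hx).trans (normLinf_le_normX hf)

lemma abs_Fc_le_normL1 {f : Fin M → ℝ → ℝ} (hf : ∀ σ, IntegrableOn (f σ) (Set.Ici 0))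
    (σ : Fin M) : |Fc f σ| ≤ normL1 f := by
  have h1 : |Fc f σ| ≤ ∫ x in Set.Ici (0:ℝ), |f σ x| := by
    simpa [Fc, Real.norm_eq_abs] using norm_integral_le_integral_norm (μ := (volume : Measure ℝ).restrict (Set.Ici 0)) (f σ)
  exact h1.trans (Finset.single_le_sum (f := fun s => ∫ x in Set.Ici (0:ℝ), |f s x|)
    (fun s _ => integral_nonneg fun _ => abs_nonneg _) (Finset.mem_univ σ))

lemma memX_subf {f g : Fin M → ℝ → ℝ} (hf : MemX f) (hg : MemX g) : MemX (subf f g) := by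
  refine ⟨fun σ => (hf.1 σ).sub (hg.1 σ), fun σ => (hf.2.1 σ).sub (hg.2.1 σ), fun σ => ?_⟩
  obtain ⟨a, ha⟩ := hf.2.2 σ
  obtain ⟨b, hb⟩ := hg.2.2 σ
  refine ⟨a + b, ?_⟩
  rintro y ⟨x, hx, rfl⟩
  have h1 : |f σ x| ≤ a := ha ⟨x, hx, rfl⟩
  have h2 : |g σ x| ≤ b := hb ⟨x, hx, rfl⟩
  calc |subf f g σ x| = |f σ x - g σ x| := rfl
    _ ≤ |f σ x| + |g σ x| := abs_sub _ _
    _ ≤ a + b := add_le_add h1 h2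

lemma Fc_subf {f g : Fin M → ℝ → ℝ} (hf : ∀ σ, IntegrableOn (f σ) (Set.Ici 0))
    (hg : ∀ σ, IntegrableOn (g σ) (Set.Ici 0)) (σ : Fin M) :
    Fc (subf f g) σ = Fc f σ - Fc g σ :=
  integral_sub (hf σ) (hg σ)

/-- Triangle-type inequality for normX. -/
lemma normX_le_add {f g : Fin M → ℝ → ℝ} (hf : MemX f) (hg : MemX g) :
    normX f ≤ normX g + normX (subf f g) := by
  have hΔ : MemX (subf f g) := memX_subf hf hg
  have hL1 : normL1 f ≤ normL1 g + normL1 (subf f g) := by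
    rw [normL1, normL1, normL1, ← Finset.sum_add_distrib]
    refine Finset.sum_le_sum fun σ _ => ?_
    rw [← integral_add ((hg.2.1 σ).abs) ((hΔ.2.1 σ).abs)]
    refine integral_mono ((hf.2.1 σ).abs) (((hg.2.1 σ).abs).add ((hΔ.2.1 σ).abs)) fun x => ?_
    have : f σ x = g σ x + (f σ x - g σ x) := by ring
    calc |f σ x| = |g σ x + (f σ x - g σ x)| := by rw [← this]
      _ ≤ |g σ x| + |f σ x - g σ x| := abs_add_le _ _
  have hLi : normLinf f ≤ normLinf g + normLinf (subf f g) := by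
    rw [normLinf, normLinf, normLinf, ← Finset.sum_add_distrib]
    refine Finset.sum_le_sum fun σ _ => ?_
    refine csSup_le ⟨|f σ 0|, 0, Set.self_mem_Ici, rfl⟩ ?_
    rintro y ⟨x, hx, rfl⟩
    have h1 : |f σ x| ≤ |g σ x| + |f σ x - g σ x| := by
      have : f σ x = g σ x + (f σ x - g σ x) := by ring
      calc |f σ x| = |g σ x + (f σ x - g σ x)| := by rw [← this]
        _ ≤ |g σ x| + |f σ x - g σ x| := abs_add_le _ _
    exact h1.trans (add_le_add (abs_le_sSup' (hg.2.2 σ) hx) (abs_le_sSup' (hΔ.2.2 σ) hx))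
  have := add_le_add hL1 hLi
  unfold normX
  linarith

noncomputable def wmin (hM : 0 < M) (w : Fin M → ℝ) : ℝ :=
  Finset.univ.inf' ⟨⟨0, hM⟩, Finset.mem_univ _⟩ w

noncomputable def wsum (w : Fin M → ℝ) : ℝ := ∑ n, w n

lemma wmin_le (hM : 0 < M) (w : Fin M → ℝ) (n : Fin M) : wmin hM w ≤ w n :=
  Finset.inf'_le w (Finset.mem_univ n)

lemma wmin_pos (hM : 0 < M) {w : Fin M → ℝ} (hw : ∀ n, 0 < w n) : 0 < wmin hM w :=
  (Finset.lt_inf'_iff _).2 fun n _ => hw n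

lemma le_wsum {w : Fin M → ℝ} (hw : ∀ n, 0 ≤ w n) (n : Fin M) : w n ≤ wsum w :=
  Finset.single_le_sum (fun s _ => hw s) (Finset.mem_univ n)

lemma wsum_pos (hM : 0 < M) {w : Fin M → ℝ} (hw : ∀ n, 0 < w n) : 0 < wsum w :=
  lt_of_lt_of_le (hw ⟨0, hM⟩) (le_wsum (fun s => (hw s).le) ⟨0, hM⟩)

end Helpers

set_option maxHeartbeats 1000000

/-- Uniform bound on the flux (Lemma B.1): there is a constant C depending only on the
model parameters such that for every positive nonzero f₀ ∈ X there is a radius r > 0 with: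
for every f in the ball of radius r around f₀, the weight denominators are positive and
‖j(f)‖ ≤ C (β + ‖f₀‖/F(f₀)) ‖f‖. -/
theorem uniformBound (M : ℕ) (P : Params M) :
    ∃ C > (0:ℝ), ∀ f₀ : Fin M → ℝ → ℝ, MemX f₀ → Positive f₀ → Nonzero f₀ →
      ∃ r > (0:ℝ), ∀ f : Fin M → ℝ → ℝ, MemX f → normX (subf f f₀) < r →
        ((∀ l ∈ bSet P, 0 < ∑ n : Fin M, P.wb l n * Fc f n) ∧
          0 < ∑ n : Fin M, P.wint n * Fc f n) ∧
        normX (flux P f) ≤ C * (P.beta + normX f₀ / Ft f₀) * normX f := by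
  haveI : Nonempty (Fin M) := ⟨⟨0, P.hM⟩⟩
  have hne : (Finset.univ : Finset (Fin M)).Nonempty := Finset.univ_nonempty
  have hwm_pos : ∀ {w : Fin M → ℝ}, (∀ n, 0 < w n) → 0 < wmin P.hM w :=
    fun hw => wmin_pos P.hM hw
  have hwm_le : ∀ (w : Fin M → ℝ) (n : Fin M), wmin P.hM w ≤ w n := wmin_le P.hM
  have hwS_pos : ∀ {w : Fin M → ℝ}, (∀ n, 0 < w n) → 0 < wsum w :=
    fun hw => wsum_pos P.hM hw
  have hbmem : ∀ l ∈ bSet P, (l : ℕ) < P.Mm := fun l hl => (Finset.mem_filter.1 hl).2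
  -- the constants
  set cB : ℝ := ∑ l ∈ bSet P, |P.v l| * (P.Kb l : ℝ) * (4 * wsum (P.wb l) / wmin P.hM (P.wb l))
    with hcB_def
  set cI : ℝ := (P.Kint : ℝ) * wsum P.wint * (3 / wmin P.hM P.wint) with hcI_def
  have hcB0 : 0 ≤ cB := Finset.sum_nonneg fun l hl => by
    have h1 := hwm_pos (P.hwb l (hbmem l hl))
    have h2 := hwS_pos (P.hwb l (hbmem l hl))
    positivity
  have hcI0 : 0 ≤ cI := by
    have h1 := hwm_pos P.hwint
    have h2 := hwS_pos P.hwint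
    positivity
  have hC_pos : (0:ℝ) < 2 * M * (cB + cI) + 1 := by
    have h1 : (0:ℝ) ≤ 2 * M := by positivity
    nlinarith [mul_nonneg h1 (add_nonneg hcB0 hcI0)]
  refine ⟨2 * M * (cB + cI) + 1, hC_pos, ?_⟩
  intro f₀ hf₀X hf₀pos hf₀nz
  -- positivity of Ft f₀
  have hFc0 : ∀ n, 0 ≤ Fc f₀ n := fun n =>
    setIntegral_nonneg measurableSet_Ici fun x hx => hf₀pos n x hx
  have hFt_pos : 0 < Ft f₀ := by
    obtain ⟨σ₀, x₀, hx₀, hnz⟩ := hf₀nz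
    have hval : 0 < f₀ σ₀ x₀ := lt_of_le_of_ne (hf₀pos σ₀ x₀ hx₀) (Ne.symm hnz)
    have hev : ∀ᶠ y in nhdsWithin x₀ (Set.Ici 0), f₀ σ₀ x₀ / 2 < f₀ σ₀ y :=
      (hf₀X.1 σ₀ x₀ hx₀).eventually_const_lt (by linarith)
    rw [Filter.eventually_iff, Metric.mem_nhdsWithin_iff] at hev
    obtain ⟨δ, hδ, hsub⟩ := hev
    have hIco : Set.Ico x₀ (x₀ + δ) ⊆ {y | f₀ σ₀ x₀ / 2 < f₀ σ₀ y} := by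
      intro y hy
      refine hsub ⟨?_, hx₀.trans hy.1⟩
      rw [Metric.mem_ball, Real.dist_eq, abs_of_nonneg (by linarith [hy.1])]
      linarith [hy.2]
    have hIci : Set.Ico x₀ (x₀ + δ) ⊆ Set.Ici (0:ℝ) := fun y hy => hx₀.trans hy.1
    have hle1 : f₀ σ₀ x₀ / 2 * (volume (Set.Ico x₀ (x₀ + δ))).toReal ≤
        ∫ x in Set.Ico x₀ (x₀ + δ), f₀ σ₀ x := by
      have := setIntegral_ge_of_const_le_real measurableSet_Ico (by simp)
        (fun x hx => (hIco hx).le) ((hf₀X.2.1 σ₀).mono_set hIci)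
      rw [measureReal_def] at this
      exact this
    have hvol : (volume (Set.Ico x₀ (x₀ + δ))).toReal = δ := by
      rw [Real.volume_Ico]
      simp [ENNReal.toReal_ofReal hδ.le]
    have hle2 : ∫ x in Set.Ico x₀ (x₀ + δ), f₀ σ₀ x ≤ Fc f₀ σ₀ := by
      refine setIntegral_mono_set (hf₀X.2.1 σ₀) ?_ (HasSubset.Subset.eventuallyLE hIci)
      exact (ae_restrict_iff' measurableSet_Ici).2 (ae_of_all _ fun x hx => hf₀pos σ₀ x hx)
    have hFcσ : 0 < Fc f₀ σ₀ := by
      rw [hvol] at hle1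
      nlinarith
    exact lt_of_lt_of_le hFcσ
      (Finset.single_le_sum (fun n _ => hFc0 n) (Finset.mem_univ σ₀))
  have hnormX₀_pos : 0 < normX f₀ := by
    have h1 : Ft f₀ ≤ normL1 f₀ := Finset.sum_le_sum fun n _ =>
      integral_mono (hf₀X.2.1 n) ((hf₀X.2.1 n).abs) fun x => le_abs_self _
    have := normLinf_nonneg hf₀X
    unfold normX; linarith
  -- the radius
  obtain ⟨ρ, hρpos, hρhalf, hρint, hρb⟩ :
      ∃ ρ : ℝ, 0 < ρ ∧ ρ ≤ 2⁻¹ ∧ ρ * (2 * wsum P.wint) ≤ wmin P.hM P.wint ∧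
        ∀ l ∈ bSet P, ρ * (2 * wsum (P.wb l)) ≤ wmin P.hM (P.wb l) := by
    classical
    set T : Finset ℝ := insert (2⁻¹ : ℝ) (insert (wmin P.hM P.wint / (2 * wsum P.wint))
      ((bSet P).image fun l => wmin P.hM (P.wb l) / (2 * wsum (P.wb l)))) with hT_def
    have hTne : T.Nonempty := Finset.insert_nonempty _ _
    have hTpos : ∀ y ∈ T, 0 < y := by
      intro y hy
      rw [hT_def] at hy
      rcases Finset.mem_insert.1 hy with h | h
      · rw [h]; norm_num
      rcases Finset.mem_insert.1 h with h | h
      · rw [h]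
        exact div_pos (hwm_pos P.hwint) (by linarith [hwS_pos P.hwint])
      · obtain ⟨l, hl, hval⟩ := Finset.mem_image.1 h
        rw [← hval]
        exact div_pos (hwm_pos (P.hwb l (hbmem l hl)))
          (by linarith [hwS_pos (P.hwb l (hbmem l hl))])
    refine ⟨T.min' hTne, hTpos _ (T.min'_mem hTne),
      Finset.min'_le T _ (Finset.mem_insert_self _ _), ?_, ?_⟩
    · have h := Finset.min'_le T (wmin P.hM P.wint / (2 * wsum P.wint))
        (Finset.mem_insert_of_mem (Finset.mem_insert_self _ _))
      have h2 := hwS_pos P.hwint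
      rw [le_div_iff₀ (by linarith)] at h
      linarith [h]
    · intro l hl
      have h := Finset.min'_le T (wmin P.hM (P.wb l) / (2 * wsum (P.wb l)))
        (Finset.mem_insert_of_mem (Finset.mem_insert_of_mem
          (Finset.mem_image_of_mem _ hl)))
      have h2 := hwS_pos (P.hwb l (hbmem l hl))
      rw [le_div_iff₀ (by linarith)] at h
      linarith [h]
  refine ⟨min (ρ * Ft f₀) (normX f₀), lt_min (mul_pos hρpos hFt_pos) hnormX₀_pos, ?_⟩
  intro f hfX hfr
  have hΔX : MemX (subf f f₀) := memX_subf hfX hf₀X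
  set d : ℝ := normX (subf f f₀) with hd_def
  have hd0 : 0 ≤ d := normX_nonneg hΔX
  have hdρ : d < ρ * Ft f₀ := lt_of_lt_of_le hfr (min_le_left _ _)
  have hdn : d < normX f₀ := lt_of_lt_of_le hfr (min_le_right _ _)
  have hFcd : ∀ n, |Fc f n - Fc f₀ n| ≤ d := by
    intro n
    rw [← Fc_subf hfX.2.1 hf₀X.2.1]
    exact (abs_Fc_le_normL1 hΔX.2.1 n).trans (normL1_le_normX hΔX)
  -- denominator lower bounds
  have hDen : ∀ w : Fin M → ℝ, (∀ n, 0 < w n) → ρ * (2 * wsum w) ≤ wmin P.hM w →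
      wmin P.hM w / 2 * Ft f₀ ≤ ∑ n, w n * Fc f n := by
    intro w hw hρw
    have h1 : wmin P.hM w * Ft f₀ ≤ ∑ n, w n * Fc f₀ n := by
      rw [Ft, Finset.mul_sum]
      exact Finset.sum_le_sum fun n _ => mul_le_mul_of_nonneg_right (hwm_le w n) (hFc0 n)
    have h2 : ∑ n, w n * Fc f n - ∑ n, w n * Fc f₀ n = ∑ n, w n * (Fc f n - Fc f₀ n) := by
      rw [← Finset.sum_sub_distrib]
      exact Finset.sum_congr rfl fun n _ => by ring
    have h3 : ∑ n, w n * (Fc f n - Fc f₀ n) ≥ -(wsum w * d) := by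
      have : ∀ n : Fin M, -(w n * d) ≤ w n * (Fc f n - Fc f₀ n) := by
        intro n
        have ha := abs_le.1 (hFcd n)
        nlinarith [(hw n).le]
      calc -(wsum w * d) = ∑ n, -(w n * d) := by
            rw [wsum, Finset.sum_mul, Finset.sum_neg_distrib]
        _ ≤ ∑ n, w n * (Fc f n - Fc f₀ n) := Finset.sum_le_sum fun n _ => this n
    have h4 : wsum w * d ≤ wsum w * (ρ * Ft f₀) :=
      mul_le_mul_of_nonneg_left hdρ.le (hwS_pos hw).le
    have h5 : wsum w * (ρ * Ft f₀) ≤ wmin P.hM w / 2 * Ft f₀ := by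
      have := mul_le_mul_of_nonneg_right hρw (le_of_lt hFt_pos)
      nlinarith
    linarith
  have hDenb : ∀ l ∈ bSet P, wmin P.hM (P.wb l) / 2 * Ft f₀ ≤ ∑ n, P.wb l n * Fc f n :=
    fun l hl => hDen (P.wb l) (P.hwb l (hbmem l hl)) (hρb l hl)
  have hDeni : wmin P.hM P.wint / 2 * Ft f₀ ≤ ∑ n, P.wint n * Fc f n :=
    hDen P.wint P.hwint hρint
  have hDenb_pos : ∀ l ∈ bSet P, 0 < ∑ n, P.wb l n * Fc f n := fun l hl =>
    lt_of_lt_of_le (mul_pos (half_pos (hwm_pos (P.hwb l (hbmem l hl)))) hFt_pos)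
      (hDenb l hl)
  have hDeni_pos : 0 < ∑ n, P.wint n * Fc f n :=
    lt_of_lt_of_le (mul_pos (half_pos (hwm_pos P.hwint)) hFt_pos) hDeni
  refine ⟨⟨hDenb_pos, hDeni_pos⟩, ?_⟩
  -- bounds on the ingredients
  have hnormf : normX f ≤ 2 * normX f₀ := by
    have := normX_le_add hfX hf₀X
    rw [← hd_def] at this
    linarith
  have hFtd : |Ft f - Ft f₀| ≤ d := by
    have h0 : Ft f - Ft f₀ = ∑ n, (Fc f n - Fc f₀ n) := by
      rw [Ft, Ft, Finset.sum_sub_distrib]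
    rw [h0]
    calc |∑ n, (Fc f n - Fc f₀ n)| ≤ ∑ n, |Fc f n - Fc f₀ n| :=
          Finset.abs_sum_le_sum_abs _ _
      _ ≤ ∑ n, ∫ x in Set.Ici (0:ℝ), |subf f f₀ n x| := by
          refine Finset.sum_le_sum fun n _ => ?_
          rw [← Fc_subf hfX.2.1 hf₀X.2.1]
          simpa [Fc, Real.norm_eq_abs] using norm_integral_le_integral_norm
            (μ := (volume : Measure ℝ).restrict (Set.Ici 0)) (subf f f₀ n)
      _ = normL1 (subf f f₀) := rfl
      _ ≤ d := normL1_le_normX hΔX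
  have hd32 : d ≤ Ft f₀ / 2 := by nlinarith [hρhalf, hFt_pos]
  have hFt_ne : Ft f₀ ≠ 0 := ne_of_gt hFt_pos
  have hgam : |gam P f| ≤ 3 / wmin P.hM P.wint := by
    have hwmI := hwm_pos P.hwint
    have hFtf : |Ft f| ≤ 3 / 2 * Ft f₀ := by
      have h1 := abs_le.1 hFtd
      rw [abs_le]
      constructor <;> nlinarith
    rw [gam, abs_div, abs_of_pos hDeni_pos]
    calc |Ft f| / (∑ n, P.wint n * Fc f n)
        ≤ (3 / 2 * Ft f₀) / (wmin P.hM P.wint / 2 * Ft f₀) :=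
          div_le_div₀ (by positivity) hFtf (mul_pos (half_pos hwmI) hFt_pos) hDeni
      _ = 3 / wmin P.hM P.wint := by
          field_simp
  have hWgt : ∀ l ∈ bSet P, ∀ s : Fin M,
      |Wgt (P.wb l) f s| ≤ 2 * wsum (P.wb l) / (wmin P.hM (P.wb l) * Ft f₀) := by
    intro l hl s
    have hw := P.hwb l (hbmem l hl)
    have hwml := hwm_pos hw
    rw [Wgt, abs_div, abs_of_pos (hDenb_pos l hl), abs_of_pos (hw s)]
    calc P.wb l s / (∑ n, P.wb l n * Fc f n)
        ≤ wsum (P.wb l) / (wmin P.hM (P.wb l) / 2 * Ft f₀) :=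
          div_le_div₀ (le_of_lt (hwS_pos hw)) (le_wsum (fun n => (hw n).le) s)
            (mul_pos (half_pos hwml) hFt_pos) (hDenb l hl)
      _ = 2 * wsum (P.wb l) / (wmin P.hM (P.wb l) * Ft f₀) := by
          field_simp
  have hLdot : ∀ l : Fin M, |Ldot P f l| ≤ |P.v l| * (2 * normX f₀) := by
    intro l
    rw [Ldot, abs_mul, abs_neg]
    exact mul_le_mul_of_nonneg_left
      ((abs_apply_le_normX hfX l le_rfl).trans hnormf) (abs_nonneg _)
  set A : ℝ := normX f₀ / Ft f₀ with hA_def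
  have hA_pos : 0 < A := div_pos hnormX₀_pos hFt_pos
  set κ : ℝ := cB * A + P.beta * cI with hκ_def
  have hκ0 : 0 ≤ κ :=
    add_nonneg (mul_nonneg hcB0 hA_pos.le) (mul_nonneg P.hbeta hcI0)
  -- coefficient bound
  have hcoef : ∀ (a : Fin M → ℝ) (b : ℝ) (t : Fin M),
      (∀ l ∈ bSet P, 0 ≤ a l ∧ a l ≤ (P.Kb l : ℝ)) → 0 ≤ b → b ≤ (P.Kint : ℝ) →
      |(∑ l ∈ bSet P, Ldot P f l * a l * Wgt (P.wb l) f t)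
        + P.beta * gam P f * b * P.wint t| ≤ κ := by
    intro a b t ha hb0 hbK
    have hterm : ∀ l ∈ bSet P, |Ldot P f l * a l * Wgt (P.wb l) f t| ≤
        (|P.v l| * (P.Kb l : ℝ) * (4 * wsum (P.wb l) / wmin P.hM (P.wb l))) * A := by
      intro l hl
      have hw := P.hwb l (hbmem l hl)
      have hwml := hwm_pos hw
      have hwSl := hwS_pos hw
      have hn0 : (0:ℝ) ≤ 2 * normX f₀ := by linarith
      calc |Ldot P f l * a l * Wgt (P.wb l) f t|
          = |Ldot P f l| * |a l| * |Wgt (P.wb l) f t| := by rw [abs_mul, abs_mul]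
        _ ≤ (|P.v l| * (2 * normX f₀)) * (P.Kb l : ℝ)
            * (2 * wsum (P.wb l) / (wmin P.hM (P.wb l) * Ft f₀)) := by
            have h2 : |a l| ≤ (P.Kb l : ℝ) := by
              rw [abs_of_nonneg (ha l hl).1]; exact (ha l hl).2
            refine mul_le_mul (mul_le_mul (hLdot l) h2 (abs_nonneg _)
              (mul_nonneg (abs_nonneg _) hn0)) (hWgt l hl t) (abs_nonneg _)
              (mul_nonneg (mul_nonneg (abs_nonneg _) hn0) (Nat.cast_nonneg _))
        _ = (|P.v l| * (P.Kb l : ℝ) * (4 * wsum (P.wb l) / wmin P.hM (P.wb l))) * A := by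
            rw [hA_def]
            field_simp
            ring
    have hsum1 : |∑ l ∈ bSet P, Ldot P f l * a l * Wgt (P.wb l) f t| ≤ cB * A := by
      rw [hcB_def, Finset.sum_mul]
      exact (Finset.abs_sum_le_sum_abs _ _).trans (Finset.sum_le_sum hterm)
    have hbterm : |P.beta * gam P f * b * P.wint t| ≤ P.beta * cI := by
      have hwmI := hwm_pos P.hwint
      have h4 : P.wint t ≤ wsum P.wint := le_wsum (fun n => (P.hwint n).le) t
      have hg0 : (0:ℝ) ≤ 3 / wmin P.hM P.wint := by positivity
      rw [abs_mul, abs_mul, abs_mul, abs_of_nonneg P.hbeta, abs_of_nonneg hb0,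
        abs_of_pos (P.hwint t)]
      calc P.beta * |gam P f| * b * P.wint t
          ≤ P.beta * (3 / wmin P.hM P.wint) * (P.Kint : ℝ) * wsum P.wint := by
            have hinner : P.beta * |gam P f| * b
                ≤ P.beta * (3 / wmin P.hM P.wint) * (P.Kint : ℝ) :=
              mul_le_mul (mul_le_mul_of_nonneg_left hgam P.hbeta) hbK hb0
                (mul_nonneg P.hbeta hg0)
            exact mul_le_mul hinner h4 (P.hwint t).le
              (mul_nonneg (mul_nonneg P.hbeta hg0) (Nat.cast_nonneg _))
        _ = P.beta * cI := by rw [hcI_def]; ring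
    rw [hκ_def]
    exact (abs_add_le _ _).trans (add_le_add hsum1 hbterm)
  -- pointwise bound on the flux
  have hJb_le : ∀ l ∈ bSet P, ∀ s σ : Fin M, (P.Jb l s σ : ℝ) ≤ (P.Kb l : ℝ) := by
    intro l hl s σ
    exact_mod_cast Nat.cast_le.2 (le_of_le_of_eq
      (Finset.single_le_sum (fun i _ => Nat.zero_le _) (Finset.mem_univ σ))
      (P.hJbrow l (hbmem l hl) s))
  have hJint_le : ∀ s σ : Fin M, (P.Jint s σ : ℝ) ≤ (P.Kint : ℝ) := by
    intro s σ
    exact_mod_cast Nat.cast_le.2 (le_of_le_of_eq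
      (Finset.single_le_sum (fun i _ => Nat.zero_le _) (Finset.mem_univ σ))
      (P.hJintrow s))
  have hptw : ∀ (σ : Fin M) (x : ℝ), |flux P f σ x| ≤ 2 * κ * ∑ s, |f s x| := by
    intro σ x
    rw [flux]
    have h1 : ∀ s : Fin M, |((∑ l ∈ bSet P, Ldot P f l * (P.Jb l s σ : ℝ) * Wgt (P.wb l) f s)
        + P.beta * gam P f * (P.Jint s σ : ℝ) * P.wint s)| ≤ κ := fun s =>
      hcoef _ _ s (fun l hl => ⟨Nat.cast_nonneg _, hJb_le l hl s σ⟩)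
        (Nat.cast_nonneg _) (hJint_le s σ)
    have h2 : |((∑ l ∈ bSet P, Ldot P f l * (P.Kb l : ℝ) * Wgt (P.wb l) f σ)
        + P.beta * gam P f * (P.Kint : ℝ) * P.wint σ)| ≤ κ :=
      hcoef _ _ σ (fun l hl => ⟨Nat.cast_nonneg _, le_rfl⟩) (Nat.cast_nonneg _) le_rfl
    have hfσ : |f σ x| ≤ ∑ s, |f s x| :=
      Finset.single_le_sum (f := fun s => |f s x|) (fun s _ => abs_nonneg _)
        (Finset.mem_univ σ)
    calc |(∑ s, ((∑ l ∈ bSet P, Ldot P f l * (P.Jb l s σ : ℝ) * Wgt (P.wb l) f s)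
            + P.beta * gam P f * (P.Jint s σ : ℝ) * P.wint s) * f s x)
          - ((∑ l ∈ bSet P, Ldot P f l * (P.Kb l : ℝ) * Wgt (P.wb l) f σ)
            + P.beta * gam P f * (P.Kint : ℝ) * P.wint σ) * f σ x|
        ≤ |∑ s, ((∑ l ∈ bSet P, Ldot P f l * (P.Jb l s σ : ℝ) * Wgt (P.wb l) f s)
            + P.beta * gam P f * (P.Jint s σ : ℝ) * P.wint s) * f s x|
          + |((∑ l ∈ bSet P, Ldot P f l * (P.Kb l : ℝ) * Wgt (P.wb l) f σ)
            + P.beta * gam P f * (P.Kint : ℝ) * P.wint σ) * f σ x| := abs_sub _ _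
      _ ≤ (∑ s, κ * |f s x|) + κ * |f σ x| := by
          refine add_le_add ((Finset.abs_sum_le_sum_abs _ _).trans
            (Finset.sum_le_sum fun s _ => ?_)) ?_
          · rw [abs_mul]
            exact mul_le_mul_of_nonneg_right (h1 s) (abs_nonneg _)
          · rw [abs_mul]
            exact mul_le_mul_of_nonneg_right h2 (abs_nonneg _)
      _ ≤ κ * (∑ s, |f s x|) + κ * (∑ s, |f s x|) := by
          rw [← Finset.mul_sum]
          exact add_le_add le_rfl (mul_le_mul_of_nonneg_left hfσ hκ0)
      _ = 2 * κ * ∑ s, |f s x| := by ring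
  -- assemble the norm bound
  have hflux_int : ∀ σ : Fin M, IntegrableOn (flux P f σ) (Set.Ici 0) := by
    intro σ
    have : flux P f σ = fun x =>
        (∑ s, ((∑ l ∈ bSet P, Ldot P f l * (P.Jb l s σ : ℝ) * Wgt (P.wb l) f s)
          + P.beta * gam P f * (P.Jint s σ : ℝ) * P.wint s) * f s x)
        - ((∑ l ∈ bSet P, Ldot P f l * (P.Kb l : ℝ) * Wgt (P.wb l) f σ)
          + P.beta * gam P f * (P.Kint : ℝ) * P.wint σ) * f σ x := rfl
    rw [this]
    exact (integrable_finset_sum _ fun s _ => (hfX.2.1 s).const_mul _).sub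
      ((hfX.2.1 σ).const_mul _)
  have hL1 : normL1 (flux P f) ≤ 2 * κ * (M * normL1 f) := by
    have hbnd_int : Integrable (fun x => 2 * κ * ∑ s, |f s x|)
        ((volume : Measure ℝ).restrict (Set.Ici 0)) :=
      (integrable_finset_sum _ fun s _ => (hfX.2.1 s).abs).const_mul _
    calc normL1 (flux P f) ≤ ∑ _σ : Fin M, 2 * κ * normL1 f := by
          refine Finset.sum_le_sum fun σ _ => ?_
          calc ∫ x in Set.Ici (0:ℝ), |flux P f σ x|
              ≤ ∫ x in Set.Ici (0:ℝ), 2 * κ * ∑ s, |f s x| :=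
                integral_mono (hflux_int σ).abs hbnd_int fun x => hptw σ x
            _ = 2 * κ * normL1 f := by
                rw [MeasureTheory.integral_const_mul, integral_finset_sum _
                  (fun s _ => (hfX.2.1 s).abs)]
                rfl
      _ = M * (2 * κ * normL1 f) := by
          rw [Finset.sum_const, Finset.card_univ, Fintype.card_fin, nsmul_eq_mul]
      _ = 2 * κ * (M * normL1 f) := by ring
  have hLinf : normLinf (flux P f) ≤ 2 * κ * (M * normLinf f) := by
    calc normLinf (flux P f) ≤ ∑ _σ : Fin M, 2 * κ * normLinf f := by
          refine Finset.sum_le_sum fun σ _ => ?_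
          refine csSup_le ⟨|flux P f σ 0|, 0, Set.self_mem_Ici, rfl⟩ ?_
          rintro y ⟨x, hx, rfl⟩
          refine (hptw σ x).trans ?_
          refine mul_le_mul_of_nonneg_left ?_ (by linarith)
          show (∑ s, |f s x|) ≤ ∑ s : Fin M, sSup ((fun x => |f s x|) '' Set.Ici 0)
          exact Finset.sum_le_sum fun s _ => abs_le_sSup' (hfX.2.2 s) hx
      _ = M * (2 * κ * normLinf f) := by
          rw [Finset.sum_const, Finset.card_univ, Fintype.card_fin, nsmul_eq_mul]
      _ = 2 * κ * (M * normLinf f) := by ring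
  have hXf : normX (flux P f) ≤ 2 * M * κ * normX f := by
    unfold normX at *
    have h1 := normL1_nonneg f
    have h2 := normLinf_nonneg hfX
    nlinarith
  have hfinal : 2 * M * κ ≤ (2 * M * (cB + cI) + 1) * (P.beta + A) := by
    have hb := P.hbeta
    have hM0 : (0:ℝ) ≤ (M:ℝ) := Nat.cast_nonneg M
    have h1 : κ ≤ (cB + cI) * (P.beta + A) := by
      rw [hκ_def]
      nlinarith [mul_nonneg hcB0 hb, mul_nonneg hcI0 hA_pos.le]
    have h2 : 2 * (M:ℝ) * κ ≤ 2 * M * ((cB + cI) * (P.beta + A)) :=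
      mul_le_mul_of_nonneg_left h1 (by linarith)
    nlinarith [add_nonneg hb hA_pos.le]
  calc normX (flux P f) ≤ 2 * M * κ * normX f := hXf
    _ ≤ (2 * M * (cB + cI) + 1) * (P.beta + A) * normX f :=
        mul_le_mul_of_nonneg_right hfinal (normX_nonneg hfX)


end GBN
end

section
/- Let f₀ ∈ X be positive and nonzero, let w̲ be the minimum of the entries w^(l)_σ over all l ∈ {1,…,M⁻} and all σ with F_σ(f₀) > 0, let w̄ be the maximum of all entries w^(l)_σ, and let 0 < r < (w̲ / (2 w̄)) F(f₀). Then there exists a constant C > 0, depending only on the weight vectors w^(l) and not on f₀, such that for all f, g in the ball of radius r around f₀ in X, every l ∈ {1,…,M⁻}, and every k ∈ {1,…,M}: |W^(l)_k(f) − W^(l)_k(g)| ≤ (C / F(f₀)²) ‖f − g‖. -/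
open MeasureTheory Filter

namespace GBN

/-- The minimum of the boundary weight entries w^(l)_σ over species σ with F_σ(f₀) > 0. -/
noncomputable def wlowB {M : ℕ} (P : Params M) (f₀ : Fin M → ℝ → ℝ) : ℝ :=
  sInf {x : ℝ | ∃ l ∈ bSet P, ∃ σ : Fin M, 0 < Fc f₀ σ ∧ x = P.wb l σ}

/-- The maximum of all boundary weight entries w^(l)_σ. -/
noncomputable def wbarB {M : ℕ} (P : Params M) : ℝ :=
  sSup {x : ℝ | ∃ l ∈ bSet P, ∃ σ : Fin M, x = P.wb l σ}

section AuxLip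

variable {M : ℕ}

lemma Fc_nonneg (f : Fin M → ℝ → ℝ) (hf : Positive f) (σ : Fin M) : 0 ≤ Fc f σ :=
  MeasureTheory.setIntegral_nonneg measurableSet_Ici (fun x hx => hf σ x hx)

lemma bddAbove_abs_sub {f g : ℝ → ℝ}
    (hf : BddAbove ((fun x => |f x|) '' Set.Ici 0))
    (hg : BddAbove ((fun x => |g x|) '' Set.Ici 0)) :
    BddAbove ((fun x => |f x - g x|) '' Set.Ici 0) := by
  obtain ⟨a, ha⟩ := hf
  obtain ⟨b, hb⟩ := hg
  refine ⟨a + b, ?_⟩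
  rintro y ⟨x, hx, rfl⟩
  have h1 : |f x| ≤ a := ha ⟨x, hx, rfl⟩
  have h2 : |g x| ≤ b := hb ⟨x, hx, rfl⟩
  calc |f x - g x| ≤ |f x| + |g x| := abs_sub _ _
    _ ≤ a + b := add_le_add h1 h2

lemma normLinf_nonneg_s16 (f : Fin M → ℝ → ℝ)
    (hb : ∀ σ, BddAbove ((fun x => |f σ x|) '' Set.Ici 0)) : 0 ≤ normLinf f :=
  Finset.sum_nonneg fun σ _ =>
    le_trans (abs_nonneg (f σ 0)) (le_csSup (hb σ) ⟨0, Set.self_mem_Ici, rfl⟩)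

lemma normL1_le_normX_sub (f g : Fin M → ℝ → ℝ) (hf : MemX f) (hg : MemX g) :
    normL1 (subf f g) ≤ normX (subf f g) :=
  le_add_of_nonneg_right (normLinf_nonneg_s16 _ fun σ => bddAbove_abs_sub (hf.2.2 σ) (hg.2.2 σ))

lemma abs_Fc_sub_le (f g : Fin M → ℝ → ℝ) (hf : MemX f) (hg : MemX g) (n : Fin M) :
    |Fc f n - Fc g n| ≤ ∫ x in Set.Ici (0:ℝ), |f n x - g n x| := by
  rw [Fc, Fc, ← MeasureTheory.integral_sub (hf.2.1 n) (hg.2.1 n)]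
  simpa [Real.norm_eq_abs] using
    MeasureTheory.norm_integral_le_integral_norm
      (μ := MeasureTheory.volume.restrict (Set.Ici 0)) (fun x => f n x - g n x)

end AuxLip

/-- Lipschitz estimate for the weights (estimate (B.24)): there exists C > 0 depending
only on the weight vectors such that for all f, g in the ball of radius
r < (w̲/(2w̄)) F(f₀) around f₀, |W^(l)_k(f) − W^(l)_k(g)| ≤ (C/F(f₀)²) ‖f − g‖. -/
theorem weightLipschitz (M : ℕ) (P : Params M) :
    ∃ C > (0:ℝ), ∀ f₀ : Fin M → ℝ → ℝ, MemX f₀ → Positive f₀ → Nonzero f₀ →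
      ∀ r : ℝ, 0 < r → r < wlowB P f₀ / (2 * wbarB P) * Ft f₀ →
        ∀ f g : Fin M → ℝ → ℝ, MemX f → MemX g →
          normX (subf f f₀) < r → normX (subf g f₀) < r →
          ∀ l ∈ bSet P, ∀ k : Fin M,
            |Wgt (P.wb l) f k - Wgt (P.wb l) g k| ≤ C / (Ft f₀)^2 * normX (subf f g) := by
  classical
  rcases (bSet P).eq_empty_or_nonempty with hbe | hbne
  · exact ⟨1, one_pos, fun f₀ _ _ _ r _ _ f g _ _ _ _ l hl k =>
      absurd hl (by simp [hbe])⟩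
  set S : Finset ℝ := ((bSet P) ×ˢ (Finset.univ : Finset (Fin M))).image
      (fun p => P.wb p.1 p.2) with hS
  have hMpos : 0 < M := P.hM
  have hSne : S.Nonempty := by
    obtain ⟨l, hl⟩ := hbne
    exact ⟨P.wb l ⟨0, hMpos⟩,
      Finset.mem_image.mpr ⟨(l, ⟨0, hMpos⟩), Finset.mem_product.mpr ⟨hl, Finset.mem_univ _⟩, rfl⟩⟩
  set wmin := S.min' hSne with hwminDef
  set wmax := S.max' hSne with hwmaxDef
  have hmemS : ∀ l ∈ bSet P, ∀ σ : Fin M, P.wb l σ ∈ S := fun l hl σ =>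
    Finset.mem_image.mpr ⟨(l, σ), Finset.mem_product.mpr ⟨hl, Finset.mem_univ _⟩, rfl⟩
  have hposS : ∀ x ∈ S, 0 < x := by
    intro x hx
    obtain ⟨p, hp, rfl⟩ := Finset.mem_image.mp hx
    exact P.hwb p.1 (by simpa [bSet] using (Finset.mem_product.mp hp).1) p.2
  have hwmin_pos : 0 < wmin := hposS _ (S.min'_mem hSne)
  have hwmax_pos : 0 < wmax := hposS _ (S.max'_mem hSne)
  -- identify wbarB with wmax
  have hset_eq : {x : ℝ | ∃ l ∈ bSet P, ∃ σ : Fin M, x = P.wb l σ} = (S : Set ℝ) := by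
    ext x
    constructor
    · rintro ⟨l, hl, σ, rfl⟩
      exact Finset.mem_coe.mpr (hmemS l hl σ)
    · intro hx
      obtain ⟨p, hp, rfl⟩ := Finset.mem_image.mp (Finset.mem_coe.mp hx)
      exact ⟨p.1, (Finset.mem_product.mp hp).1, p.2, rfl⟩
  have hwbar : wbarB P = wmax := by
    rw [wbarB, hset_eq]
    exact hSne.csSup_eq_max'
  refine ⟨4 * wmax ^ 2 / wmin ^ 2, by positivity, ?_⟩
  intro f₀ hf₀X hf₀pos _hf₀nz r hr hr2 f g hfX hgX hnf hng l hl k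
  rw [hwbar] at hr2
  set T : Set ℝ := {x : ℝ | ∃ l ∈ bSet P, ∃ σ : Fin M, 0 < Fc f₀ σ ∧ x = P.wb l σ} with hT
  have hTsub : ∀ x ∈ T, x ∈ S := by
    rintro x ⟨l', hl', σ, _, rfl⟩
    exact hmemS l' hl' σ
  have hTbdd : BddBelow T := ⟨0, fun x hx => (hposS x (hTsub x hx)).le⟩
  have hTne : T.Nonempty := by
    rcases T.eq_empty_or_nonempty with he | hne
    · exfalso
      rw [wlowB, ← hT, he, Real.sInf_empty] at hr2
      simp only [zero_div, zero_mul] at hr2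
      linarith
    · exact hne
  have hwlow_eq : wlowB P f₀ = sInf T := by rw [wlowB, hT]
  set wlow := sInf T with hwlowDef
  rw [hwlow_eq] at hr2
  have hwmin_le_wlow : wmin ≤ wlow :=
    le_csInf hTne fun x hx => S.min'_le x (hTsub x hx)
  have hwlow_pos : 0 < wlow := lt_of_lt_of_le hwmin_pos hwmin_le_wlow
  have hFt_pos : 0 < Ft f₀ := by
    by_contra hc
    push_neg at hc
    have h1 : 0 < wlow / (2 * wmax) := by positivity
    nlinarith
  have hwle : ∀ σ, P.wb l σ ≤ wmax := fun σ => S.le_max' _ (hmemS l hl σ)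
  -- key difference bound
  have hSdiff : ∀ a b : Fin M → ℝ → ℝ, MemX a → MemX b →
      |(∑ n, P.wb l n * Fc a n) - ∑ n, P.wb l n * Fc b n| ≤ wmax * normX (subf a b) := by
    intro a b ha hb
    have h1 : (∑ n, P.wb l n * Fc a n) - ∑ n, P.wb l n * Fc b n
        = ∑ n, P.wb l n * (Fc a n - Fc b n) := by
      rw [← Finset.sum_sub_distrib]
      exact Finset.sum_congr rfl fun n _ => (mul_sub _ _ _).symm
    rw [h1]
    calc |∑ n, P.wb l n * (Fc a n - Fc b n)|
        ≤ ∑ n, |P.wb l n * (Fc a n - Fc b n)| := Finset.abs_sum_le_sum_abs _ _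
      _ ≤ ∑ n, wmax * ∫ x in Set.Ici (0:ℝ), |a n x - b n x| := by
          apply Finset.sum_le_sum
          intro n _
          rw [abs_mul, abs_of_pos (P.hwb l (by simpa [bSet] using hl) n)]
          exact mul_le_mul (hwle n) (abs_Fc_sub_le a b ha hb n) (abs_nonneg _) hwmax_pos.le
      _ = wmax * normL1 (subf a b) := by rw [normL1, ← Finset.mul_sum]; rfl
      _ ≤ wmax * normX (subf a b) :=
          mul_le_mul_of_nonneg_left (normL1_le_normX_sub a b ha hb) hwmax_pos.le
  -- lower bound on the f₀ denominator
  have hS0_ge : wlow * Ft f₀ ≤ ∑ n, P.wb l n * Fc f₀ n := by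
    rw [Ft, Finset.mul_sum]
    apply Finset.sum_le_sum
    intro n _
    rcases (Fc_nonneg f₀ hf₀pos n).eq_or_lt with h | h
    · rw [← h]; simp
    · exact mul_le_mul_of_nonneg_right
        (csInf_le hTbdd ⟨l, hl, n, h, rfl⟩) (Fc_nonneg f₀ hf₀pos n)
  have hr2' : r * (2 * wmax) < wlow * Ft f₀ := by
    rw [div_mul_eq_mul_div] at hr2
    exact (lt_div_iff₀ (by positivity)).mp hr2
  -- lower bounds on the f and g denominators
  have hlb : ∀ a : Fin M → ℝ → ℝ, MemX a → normX (subf a f₀) < r →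
      wmin / 2 * Ft f₀ ≤ ∑ n, P.wb l n * Fc a n := by
    intro a ha hna
    have habs := hSdiff a f₀ ha hf₀X
    have h1 := (abs_le.mp habs).1
    have h2 : wmax * normX (subf a f₀) ≤ wmax * r :=
      mul_le_mul_of_nonneg_left hna.le hwmax_pos.le
    nlinarith [mul_nonneg (sub_nonneg.mpr hwmin_le_wlow) hFt_pos.le]
  have hSf := hlb f hfX hnf
  have hSg := hlb g hgX hng
  set Sf := ∑ n, P.wb l n * Fc f n with hSfDef
  set Sg := ∑ n, P.wb l n * Fc g n with hSgDef
  have hq : 0 < wmin / 2 * Ft f₀ := by positivity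
  have hSf_pos : 0 < Sf := lt_of_lt_of_le hq hSf
  have hSg_pos : 0 < Sg := lt_of_lt_of_le hq hSg
  have hW : Wgt (P.wb l) f k - Wgt (P.wb l) g k = P.wb l k * (Sg - Sf) / (Sf * Sg) := by
    rw [Wgt, Wgt, ← hSfDef, ← hSgDef]
    field_simp
  rw [hW, abs_div, abs_of_pos (mul_pos hSf_pos hSg_pos), abs_mul]
  have hnum : |P.wb l k| * |Sg - Sf| ≤ wmax * (wmax * normX (subf f g)) := by
    have h1 : |P.wb l k| ≤ wmax := by
      rw [abs_of_pos (P.hwb l (by simpa [bSet] using hl) k)]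
      exact hwle k
    have h2 : |Sg - Sf| ≤ wmax * normX (subf f g) := by
      rw [abs_sub_comm]
      exact hSdiff f g hfX hgX
    exact mul_le_mul h1 h2 (abs_nonneg _) hwmax_pos.le
  have hdle : (wmin / 2 * Ft f₀) ^ 2 ≤ Sf * Sg := by
    rw [sq]
    exact mul_le_mul hSf hSg hq.le (hq.le.trans hSf)
  have hNnn : 0 ≤ normX (subf f g) := by
    have h1 : 0 ≤ normL1 (subf f g) :=
      Finset.sum_nonneg fun σ _ =>
        MeasureTheory.integral_nonneg fun x => abs_nonneg _
    have h2 : 0 ≤ normLinf (subf f g) :=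
      normLinf_nonneg_s16 _ fun σ => bddAbove_abs_sub (hfX.2.2 σ) (hgX.2.2 σ)
    exact add_nonneg h1 h2
  calc |P.wb l k| * |Sg - Sf| / (Sf * Sg)
      ≤ wmax * (wmax * normX (subf f g)) / ((wmin / 2 * Ft f₀) ^ 2) :=
        div_le_div₀ (by positivity) hnum (by positivity) hdle
    _ = 4 * wmax ^ 2 / wmin ^ 2 / (Ft f₀) ^ 2 * normX (subf f g) := by
        field_simp
        ring

end GBN
end

section
/- Defect flux identity: let f = (f_2,…,f_M) ∈ X be positive with Σ_k w^(l)_k F_k(f) > 0 for every l ∈ {2,3,4,5} and Σ_k w^(0)_k F_k(f) > 0. Then the grain flux satisfies Σ_{n=2}^M (n − 6) ∫₀^∞ j_n(a) da = − Σ_{n=2}^5 (n − 6)² f_n(0); consequently, for classical solutions of the grain kinetic equations, d/dt Σ_{n=2}^M (n−6) F_n(t) = 0. -/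
open MeasureTheory Filter

namespace Grain

/-- Parameters of the grain kinetic model: maximal number of sides M ≥ 7, nonnegative weight
vectors w^(2), w^(3), w^(4), w^(5), w^(0) on {2,…,M} with the closure conditions, and an
edge-deletion rate β ≥ 0. -/
structure GParams where
  M : ℕ
  hM : 7 ≤ M
  w2 : ℕ → ℝ
  w3 : ℕ → ℝ
  w4 : ℕ → ℝ
  w5 : ℕ → ℝ
  w0 : ℕ → ℝ
  hw2 : ∀ k, 0 ≤ w2 k
  hw3 : ∀ k, 0 ≤ w3 k
  hw4 : ∀ k, 0 ≤ w4 k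
  hw5 : ∀ k, 0 ≤ w5 k
  hw0 : ∀ k, 0 ≤ w0 k
  hc22 : w2 2 = 0
  hc23 : w2 3 = 0
  hc32 : w3 2 = 0
  hc42 : w4 2 = 0
  hc52 : w5 2 = 0
  hc5M : w5 M = 0
  hc02 : w0 2 = 0
  hc0M : w0 M = 0
  beta : ℝ
  hbeta : 0 ≤ beta

/-- Membership in X for the grain model: densities f_n for n ∈ {2,…,M} are continuous,
integrable and bounded on [0,∞), and f_n ≡ 0 for n < 2 or n > M. -/
def GMemX (G : GParams) (f : ℕ → ℝ → ℝ) : Prop :=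
  (∀ n : ℕ, n < 2 ∨ G.M < n → ∀ a : ℝ, f n a = 0) ∧
  (∀ n, ContinuousOn (f n) (Set.Ici 0)) ∧
  (∀ n, IntegrableOn (f n) (Set.Ici 0)) ∧
  (∀ n, BddAbove ((fun a => |f n a|) '' Set.Ici 0))

def GPositive (f : ℕ → ℝ → ℝ) : Prop := ∀ n : ℕ, ∀ a : ℝ, 0 ≤ a → 0 ≤ f n a

def GNonzero (f : ℕ → ℝ → ℝ) : Prop := ∃ n : ℕ, ∃ a : ℝ, 0 ≤ a ∧ f n a ≠ 0

noncomputable def GnormX (G : GParams) (f : ℕ → ℝ → ℝ) : ℝ :=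
  (∑ n ∈ Finset.Icc 2 G.M, ∫ a in Set.Ici (0:ℝ), |f n a|) +
  (∑ n ∈ Finset.Icc 2 G.M, sSup ((fun a => |f n a|) '' Set.Ici 0))

/-- Total number of n-sided grains. -/
noncomputable def GFc (f : ℕ → ℝ → ℝ) (n : ℕ) : ℝ := ∫ a in Set.Ici (0:ℝ), f n a

/-- Total grain number. -/
noncomputable def GFt (G : GParams) (f : ℕ → ℝ → ℝ) : ℝ := ∑ n ∈ Finset.Icc 2 G.M, GFc f n

/-- The weighted fraction W^(l)_n. -/
noncomputable def GW (G : GParams) (w : ℕ → ℝ) (f : ℕ → ℝ → ℝ) (n : ℕ) : ℝ :=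
  w n / ∑ k ∈ Finset.Icc 2 G.M, w k * GFc f k

/-- The weighted fraction γ. -/
noncomputable def Ggam (G : GParams) (f : ℕ → ℝ → ℝ) : ℝ :=
  GFt G f / ∑ k ∈ Finset.Icc 2 G.M, G.w0 k * GFc f k

/-- The flux j_n = h_gr^{n,+} − h_gr^{n,−} + h_ed^{n,+} − h_ed^{n,−} of the grain kinetic
equations. -/
noncomputable def Gflux (G : GParams) (f : ℕ → ℝ → ℝ) (n : ℕ) (a : ℝ) : ℝ :=
  (8 * f 2 0 * GW G G.w2 f (n+2) * f (n+2) a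
    + 9 * f 3 0 * GW G G.w3 f (n+1) * f (n+1) a
    + 4 * f 4 0 * GW G G.w4 f (n+1) * f (n+1) a
    + 2 * f 5 0 * GW G G.w5 f (n+1) * f (n+1) a
    + f 5 0 * GW G G.w5 f (n-1) * f (n-1) a)
  - f n a * (8 * f 2 0 * GW G G.w2 f n + 9 * f 3 0 * GW G G.w3 f n
    + 4 * f 4 0 * GW G G.w4 f n + 3 * f 5 0 * GW G G.w5 f n)
  + 2 * G.beta * Ggam G f * (G.w0 (n-1) * f (n-1) a + G.w0 (n+1) * f (n+1) a)
  - 4 * G.beta * Ggam G f * G.w0 n * f n a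

/-- Extension by zero to negative arguments. -/
noncomputable def ext (g : ℝ → ℝ) (x : ℝ) : ℝ := if 0 ≤ x then g x else 0

/-- Continuity in time with values in X. -/
def GContinuousInX (G : GParams) (T : ℝ) (u : ℝ → ℕ → ℝ → ℝ) : Prop :=
  ∀ t ∈ Set.Icc (0:ℝ) T, ∀ ε > (0:ℝ), ∃ δ > (0:ℝ), ∀ s ∈ Set.Icc (0:ℝ) T,
    |s - t| < δ → GnormX G (fun n a => u s n a - u t n a) < ε

/-- A mild solution of the grain kinetic equations on [0,T]. -/
def GMildSolution (G : GParams) (T : ℝ) (u : ℝ → ℕ → ℝ → ℝ) : Prop :=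
  (∀ t ∈ Set.Icc (0:ℝ) T, GMemX G (u t)) ∧
  GContinuousInX G T u ∧
  ∀ n ∈ Finset.Icc 2 G.M, ∀ a : ℝ, 0 ≤ a → ∀ t ∈ Set.Icc (0:ℝ) T,
    u t n a = ext (u 0 n) (a - ((n:ℝ) - 6) * t)
      + ∫ τ in (0:ℝ)..t, ext (fun y => Gflux G (u τ) n y) (a - ((n:ℝ) - 6) * (t - τ))

def GPositiveOn (T : ℝ) (u : ℝ → ℕ → ℝ → ℝ) : Prop :=
  ∀ t ∈ Set.Icc (0:ℝ) T, GPositive (u t)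

/-- u is the unique maximal positive mild solution of the grain kinetic equations with
initial datum f₀, defined on [0, Tstar). -/
def GIsMaximalSolution (G : GParams) (f₀ : ℕ → ℝ → ℝ)
    (Tstar : ENNReal) (u : ℝ → ℕ → ℝ → ℝ) : Prop :=
  0 < Tstar ∧
  (∀ n : ℕ, ∀ a : ℝ, 0 ≤ a → u 0 n a = f₀ n a) ∧
  (∀ T : ℝ, 0 < T → ENNReal.ofReal T < Tstar → GMildSolution G T u ∧ GPositiveOn T u) ∧
  (∀ T : ℝ, 0 < T → ∀ g : ℝ → ℕ → ℝ → ℝ,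
      GMildSolution G T g → GPositiveOn T g → (∀ n : ℕ, ∀ a : ℝ, 0 ≤ a → g 0 n a = f₀ n a) →
      ENNReal.ofReal T < Tstar ∧
        ∀ t ∈ Set.Icc (0:ℝ) T, ∀ n : ℕ, ∀ a : ℝ, 0 ≤ a → g t n a = u t n a)

/-- The polyhedral defect P = Σ (n−6) F_n. -/
noncomputable def GDefect (G : GParams) (f : ℕ → ℝ → ℝ) : ℝ :=
  ∑ n ∈ Finset.Icc 2 G.M, ((n:ℝ) - 6) * GFc f n

/-- The total area A = Σ ∫ a f_n(a) da. -/
noncomputable def GArea (G : GParams) (f : ℕ → ℝ → ℝ) : ℝ :=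
  ∑ n ∈ Finset.Icc 2 G.M, ∫ a in Set.Ici (0:ℝ), a * f n a

end Grain

namespace Grain

private lemma integral_comb4 {μ : Measure ℝ} {g1 g2 g3 g4 : ℝ → ℝ}
    (h1 : Integrable g1 μ) (h2 : Integrable g2 μ) (h3 : Integrable g3 μ)
    (h4 : Integrable g4 μ) (c1 c2 c3 c4 : ℝ) :
    ∫ a, (c1 * g1 a + c2 * g2 a + c3 * g3 a + c4 * g4 a) ∂μ
      = c1 * (∫ a, g1 a ∂μ) + c2 * (∫ a, g2 a ∂μ) + c3 * (∫ a, g3 a ∂μ)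
        + c4 * (∫ a, g4 a ∂μ) := by
  have i1 : Integrable (fun a => c1 * g1 a) μ := h1.const_mul c1
  have i2 : Integrable (fun a => c2 * g2 a) μ := h2.const_mul c2
  have i3 : Integrable (fun a => c3 * g3 a) μ := h3.const_mul c3
  have i4 : Integrable (fun a => c4 * g4 a) μ := h4.const_mul c4
  have i12 : Integrable (fun a => c1 * g1 a + c2 * g2 a) μ := i1.add i2
  have i123 : Integrable (fun a => c1 * g1 a + c2 * g2 a + c3 * g3 a) μ := i12.add i3
  rw [integral_add i123 i4, integral_add i12 i3,
      integral_add i1 i2, integral_const_mul, integral_const_mul, integral_const_mul,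
      integral_const_mul]

private lemma sum_shift_up (M k : ℕ) (g : ℕ → ℝ) (c d : ℝ) (hcd : c + k = d)
    (hlow : ∀ m, m < 2 + k → g m = 0) (hhigh : ∀ m, M < m → g m = 0) :
    ∑ n ∈ Finset.Icc 2 M, ((n : ℝ) - c) * g (n + k)
      = ∑ n ∈ Finset.Icc 2 M, ((n : ℝ) - d) * g n := by
  have h1 : ∑ n ∈ Finset.Icc 2 M, ((n : ℝ) - c) * g (n + k)
      = ∑ m ∈ Finset.Icc (2 + k) (M + k), ((m : ℝ) - d) * g m := by
    refine Finset.sum_nbij' (fun n => n + k) (fun m => m - k) ?_ ?_ ?_ ?_ ?_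
    · intro a ha; simp only [Finset.mem_Icc] at *; omega
    · intro a ha; simp only [Finset.mem_Icc] at *; omega
    · intro a _; omega
    · intro a ha; simp only [Finset.mem_Icc] at ha; omega
    · intro a _; push_cast; rw [← hcd]; ring
  rw [h1]
  have h2 : ∑ m ∈ Finset.Icc (2 + k) (M + k), ((m : ℝ) - d) * g m
      = ∑ m ∈ Finset.Icc 2 (M + k), ((m : ℝ) - d) * g m := by
    refine Finset.sum_subset (Finset.Icc_subset_Icc (by omega) le_rfl) ?_
    intro x hx hx'
    simp only [Finset.mem_Icc] at hx hx'
    rw [hlow x (by omega), mul_zero]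
  rw [h2]
  refine (Finset.sum_subset (Finset.Icc_subset_Icc le_rfl (by omega)) ?_).symm
  intro x hx hx'
  simp only [Finset.mem_Icc] at hx hx'
  rw [hhigh x (by omega), mul_zero]

private lemma sum_shift_down (M : ℕ) (g : ℕ → ℝ) (c d : ℝ) (hcd : c - 1 = d) (hM : 2 ≤ M)
    (h1 : g 1 = 0) (hMg : g M = 0) :
    ∑ n ∈ Finset.Icc 2 M, ((n : ℝ) - c) * g (n - 1)
      = ∑ n ∈ Finset.Icc 2 M, ((n : ℝ) - d) * g n := by
  have e1 : ∑ n ∈ Finset.Icc 2 M, ((n : ℝ) - c) * g (n - 1)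
      = ∑ m ∈ Finset.Icc 1 (M - 1), ((m : ℝ) - d) * g m := by
    refine Finset.sum_nbij' (fun n => n - 1) (fun m => m + 1) ?_ ?_ ?_ ?_ ?_
    · intro a ha; simp only [Finset.mem_Icc] at *; omega
    · intro a ha; simp only [Finset.mem_Icc] at *; omega
    · intro a ha; simp only [Finset.mem_Icc] at ha; omega
    · intro a _; omega
    · intro a ha
      simp only [Finset.mem_Icc] at ha
      rw [Nat.cast_sub (by omega), ← hcd]
      push_cast; ring
  rw [e1]
  have e2 : ∑ m ∈ Finset.Icc 1 (M - 1), ((m : ℝ) - d) * g m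
      = ∑ m ∈ Finset.Icc 1 M, ((m : ℝ) - d) * g m := by
    refine Finset.sum_subset (Finset.Icc_subset_Icc le_rfl (by omega)) ?_
    intro x hx hx'
    simp only [Finset.mem_Icc] at hx hx'
    have : x = M := by omega
    rw [this, hMg, mul_zero]
  rw [e2]
  refine (Finset.sum_subset (Finset.Icc_subset_Icc (by omega) le_rfl) ?_).symm
  intro x hx hx'
  simp only [Finset.mem_Icc] at hx hx'
  have : x = 1 := by omega
  rw [this, h1, mul_zero]

/-- Defect flux identity: for positive f ∈ X with positive weight denominators,
Σ_{n=2}^M (n−6) ∫₀^∞ j_n(a) da = − Σ_{n=2}^5 (n−6)² f_n(0). -/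
theorem defectFluxIdentity (G : GParams) (f : ℕ → ℝ → ℝ)
    (hmem : GMemX G f) (hpos : GPositive f)
    (hd2 : 0 < ∑ k ∈ Finset.Icc 2 G.M, G.w2 k * GFc f k)
    (hd3 : 0 < ∑ k ∈ Finset.Icc 2 G.M, G.w3 k * GFc f k)
    (hd4 : 0 < ∑ k ∈ Finset.Icc 2 G.M, G.w4 k * GFc f k)
    (hd5 : 0 < ∑ k ∈ Finset.Icc 2 G.M, G.w5 k * GFc f k)
    (hd0 : 0 < ∑ k ∈ Finset.Icc 2 G.M, G.w0 k * GFc f k) :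
    ∑ n ∈ Finset.Icc 2 G.M, ((n:ℝ) - 6) * ∫ a in Set.Ici (0:ℝ), Gflux G f n a
      = - ∑ n ∈ Finset.Icc (2:ℕ) 5, ((n:ℝ) - 6)^2 * f n 0 := by
  obtain ⟨hzero, hcont, hint, hbdd⟩ := hmem
  have hF0 : ∀ m : ℕ, m < 2 ∨ G.M < m → GFc f m = 0 := by
    intro m hm
    unfold GFc
    rw [show f m = fun _ => (0:ℝ) from funext fun a => hzero m hm a]
    simp
  -- integrate the flux termwise
  have hflux : ∀ n : ℕ, (∫ a in Set.Ici (0:ℝ), Gflux G f n a)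
      = (8 * f 2 0 * GW G G.w2 f (n+2)) * GFc f (n+2)
      + (9 * f 3 0 * GW G G.w3 f (n+1) + 4 * f 4 0 * GW G G.w4 f (n+1)
          + 2 * f 5 0 * GW G G.w5 f (n+1) + 2 * G.beta * Ggam G f * G.w0 (n+1)) * GFc f (n+1)
      + (f 5 0 * GW G G.w5 f (n-1) + 2 * G.beta * Ggam G f * G.w0 (n-1)) * GFc f (n-1)
      + (-(8 * f 2 0 * GW G G.w2 f n + 9 * f 3 0 * GW G G.w3 f n
            + 4 * f 4 0 * GW G G.w4 f n + 3 * f 5 0 * GW G G.w5 f n)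
          - 4 * G.beta * Ggam G f * G.w0 n) * GFc f n := by
    intro n
    have heq : ∀ a : ℝ, Gflux G f n a
        = (8 * f 2 0 * GW G G.w2 f (n+2)) * f (n+2) a
        + (9 * f 3 0 * GW G G.w3 f (n+1) + 4 * f 4 0 * GW G G.w4 f (n+1)
            + 2 * f 5 0 * GW G G.w5 f (n+1) + 2 * G.beta * Ggam G f * G.w0 (n+1)) * f (n+1) a
        + (f 5 0 * GW G G.w5 f (n-1) + 2 * G.beta * Ggam G f * G.w0 (n-1)) * f (n-1) a
        + (-(8 * f 2 0 * GW G G.w2 f n + 9 * f 3 0 * GW G G.w3 f n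
              + 4 * f 4 0 * GW G G.w4 f n + 3 * f 5 0 * GW G G.w5 f n)
            - 4 * G.beta * Ggam G f * G.w0 n) * f n a := by
      intro a; simp only [Gflux]; ring
    simp only [heq]
    unfold GFc
    exact integral_comb4 (hint (n+2)) (hint (n+1)) (hint (n-1)) (hint n) _ _ _ _
  -- rewrite each summand with constants pulled out
  have key : ∀ n ∈ Finset.Icc 2 G.M, ((n:ℝ) - 6) * ∫ a in Set.Ici (0:ℝ), Gflux G f n a
      = (8 * f 2 0 / ∑ k ∈ Finset.Icc 2 G.M, G.w2 k * GFc f k)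
          * (((n:ℝ) - 6) * (G.w2 (n+2) * GFc f (n+2)))
      + (9 * f 3 0 / ∑ k ∈ Finset.Icc 2 G.M, G.w3 k * GFc f k)
          * (((n:ℝ) - 6) * (G.w3 (n+1) * GFc f (n+1)))
      + (4 * f 4 0 / ∑ k ∈ Finset.Icc 2 G.M, G.w4 k * GFc f k)
          * (((n:ℝ) - 6) * (G.w4 (n+1) * GFc f (n+1)))
      + (2 * f 5 0 / ∑ k ∈ Finset.Icc 2 G.M, G.w5 k * GFc f k)
          * (((n:ℝ) - 6) * (G.w5 (n+1) * GFc f (n+1)))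
      + (2 * G.beta * Ggam G f) * (((n:ℝ) - 6) * (G.w0 (n+1) * GFc f (n+1)))
      + (f 5 0 / ∑ k ∈ Finset.Icc 2 G.M, G.w5 k * GFc f k)
          * (((n:ℝ) - 6) * (G.w5 (n-1) * GFc f (n-1)))
      + (2 * G.beta * Ggam G f) * (((n:ℝ) - 6) * (G.w0 (n-1) * GFc f (n-1)))
      - (8 * f 2 0 / ∑ k ∈ Finset.Icc 2 G.M, G.w2 k * GFc f k)
          * (((n:ℝ) - 6) * (G.w2 n * GFc f n))
      - (9 * f 3 0 / ∑ k ∈ Finset.Icc 2 G.M, G.w3 k * GFc f k)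
          * (((n:ℝ) - 6) * (G.w3 n * GFc f n))
      - (4 * f 4 0 / ∑ k ∈ Finset.Icc 2 G.M, G.w4 k * GFc f k)
          * (((n:ℝ) - 6) * (G.w4 n * GFc f n))
      - (3 * f 5 0 / ∑ k ∈ Finset.Icc 2 G.M, G.w5 k * GFc f k)
          * (((n:ℝ) - 6) * (G.w5 n * GFc f n))
      - (4 * G.beta * Ggam G f) * (((n:ℝ) - 6) * (G.w0 n * GFc f n)) := by
    intro n _
    rw [hflux n]
    simp only [GW]
    ring
  rw [Finset.sum_congr rfl key]
  simp only [Finset.sum_add_distrib, Finset.sum_sub_distrib, ← Finset.mul_sum]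
  -- shift the sums
  have sh2 : ∑ n ∈ Finset.Icc 2 G.M, ((n:ℝ) - 6) * (G.w2 (n+2) * GFc f (n+2))
      = ∑ n ∈ Finset.Icc 2 G.M, ((n:ℝ) - 8) * (G.w2 n * GFc f n) := by
    refine sum_shift_up G.M 2 (fun m => G.w2 m * GFc f m) 6 8 (by norm_num) ?_ ?_
    · intro m hm
      interval_cases m
      · rw [hF0 0 (Or.inl (by omega)), mul_zero]
      · rw [hF0 1 (Or.inl (by omega)), mul_zero]
      · rw [G.hc22, zero_mul]
      · rw [G.hc23, zero_mul]
    · intro m hm; rw [hF0 m (Or.inr hm), mul_zero]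
  have sh3 : ∑ n ∈ Finset.Icc 2 G.M, ((n:ℝ) - 6) * (G.w3 (n+1) * GFc f (n+1))
      = ∑ n ∈ Finset.Icc 2 G.M, ((n:ℝ) - 7) * (G.w3 n * GFc f n) := by
    refine sum_shift_up G.M 1 (fun m => G.w3 m * GFc f m) 6 7 (by norm_num) ?_ ?_
    · intro m hm
      interval_cases m
      · rw [hF0 0 (Or.inl (by omega)), mul_zero]
      · rw [hF0 1 (Or.inl (by omega)), mul_zero]
      · rw [G.hc32, zero_mul]
    · intro m hm; rw [hF0 m (Or.inr hm), mul_zero]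
  have sh4 : ∑ n ∈ Finset.Icc 2 G.M, ((n:ℝ) - 6) * (G.w4 (n+1) * GFc f (n+1))
      = ∑ n ∈ Finset.Icc 2 G.M, ((n:ℝ) - 7) * (G.w4 n * GFc f n) := by
    refine sum_shift_up G.M 1 (fun m => G.w4 m * GFc f m) 6 7 (by norm_num) ?_ ?_
    · intro m hm
      interval_cases m
      · rw [hF0 0 (Or.inl (by omega)), mul_zero]
      · rw [hF0 1 (Or.inl (by omega)), mul_zero]
      · rw [G.hc42, zero_mul]
    · intro m hm; rw [hF0 m (Or.inr hm), mul_zero]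
  have sh5 : ∑ n ∈ Finset.Icc 2 G.M, ((n:ℝ) - 6) * (G.w5 (n+1) * GFc f (n+1))
      = ∑ n ∈ Finset.Icc 2 G.M, ((n:ℝ) - 7) * (G.w5 n * GFc f n) := by
    refine sum_shift_up G.M 1 (fun m => G.w5 m * GFc f m) 6 7 (by norm_num) ?_ ?_
    · intro m hm
      interval_cases m
      · rw [hF0 0 (Or.inl (by omega)), mul_zero]
      · rw [hF0 1 (Or.inl (by omega)), mul_zero]
      · rw [G.hc52, zero_mul]
    · intro m hm; rw [hF0 m (Or.inr hm), mul_zero]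
  have sh0 : ∑ n ∈ Finset.Icc 2 G.M, ((n:ℝ) - 6) * (G.w0 (n+1) * GFc f (n+1))
      = ∑ n ∈ Finset.Icc 2 G.M, ((n:ℝ) - 7) * (G.w0 n * GFc f n) := by
    refine sum_shift_up G.M 1 (fun m => G.w0 m * GFc f m) 6 7 (by norm_num) ?_ ?_
    · intro m hm
      interval_cases m
      · rw [hF0 0 (Or.inl (by omega)), mul_zero]
      · rw [hF0 1 (Or.inl (by omega)), mul_zero]
      · rw [G.hc02, zero_mul]
    · intro m hm; rw [hF0 m (Or.inr hm), mul_zero]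
  have sh5d : ∑ n ∈ Finset.Icc 2 G.M, ((n:ℝ) - 6) * (G.w5 (n-1) * GFc f (n-1))
      = ∑ n ∈ Finset.Icc 2 G.M, ((n:ℝ) - 5) * (G.w5 n * GFc f n) := by
    refine sum_shift_down G.M (fun m => G.w5 m * GFc f m) 6 5 (by norm_num)
      (by have := G.hM; omega) ?_ ?_
    · rw [hF0 1 (Or.inl (by omega)), mul_zero]
    · rw [G.hc5M, zero_mul]
  have sh0d : ∑ n ∈ Finset.Icc 2 G.M, ((n:ℝ) - 6) * (G.w0 (n-1) * GFc f (n-1))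
      = ∑ n ∈ Finset.Icc 2 G.M, ((n:ℝ) - 5) * (G.w0 n * GFc f n) := by
    refine sum_shift_down G.M (fun m => G.w0 m * GFc f m) 6 5 (by norm_num)
      (by have := G.hM; omega) ?_ ?_
    · rw [hF0 1 (Or.inl (by omega)), mul_zero]
    · rw [G.hc0M, zero_mul]
  rw [sh2, sh3, sh4, sh5, sh0, sh5d, sh0d]
  -- expand (n - c) * (w n * F n) into n * (w n * F n) - c * (w n * F n)
  have expand : ∀ (w : ℕ → ℝ) (c : ℝ),
      ∑ n ∈ Finset.Icc 2 G.M, ((n:ℝ) - c) * (w n * GFc f n)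
        = (∑ n ∈ Finset.Icc 2 G.M, (n:ℝ) * (w n * GFc f n))
          - c * ∑ n ∈ Finset.Icc 2 G.M, w n * GFc f n := by
    intro w c
    rw [Finset.mul_sum, ← Finset.sum_sub_distrib]
    exact Finset.sum_congr rfl fun n _ => by ring
  rw [expand G.w2 8, expand G.w3 7, expand G.w4 7, expand G.w5 7, expand G.w0 7,
      expand G.w5 5, expand G.w0 5, expand G.w2 6, expand G.w3 6, expand G.w4 6,
      expand G.w5 6, expand G.w0 6]
  have hIcc : Finset.Icc (2:ℕ) 5 = {2, 3, 4, 5} := by decide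
  rw [hIcc]
  have h2 := hd2.ne'
  have h3 := hd3.ne'
  have h4 := hd4.ne'
  have h5 := hd5.ne'
  rw [Finset.sum_insert (by decide), Finset.sum_insert (by decide),
      Finset.sum_insert (by decide), Finset.sum_singleton]
  field_simp
  ring

end Grain
end
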